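/- The map g = f₀ ∘ h is a continuous bijection from Ξ onto ℂ₊ \ {u₀}; it maps the interior of Ξ homeomorphically onto ℂ₊ \ (Γ_{π/2} ∪ {u₀}), where Γ_{π/2} = {g(π/2, ξ) : ξ < −π/2}, and this image is an open, simply connected subset of ℂ. -/

import Mathlib

/-- The point `u₀ = (1 + √3 i)/2`. -/
noncomputable def u0 : ℂ := (1 + Real.sqrt 3 * Complex.I) / 2

/-- The map `h(η, ξ) = exp(−√3(η + ξ) + iξ)`. -/
noncomputable def hfun (p : ℝ × ℝ) : ℂ :=
  Complex.exp ((-(Real.sqrt 3) * (p.1 + p.2) : ℝ) + Complex.I * (p.2 : ℂ))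

/-- The map `f₀(v) = √3 i (v − 1)/(1 − |v|²) + u₀`. -/
noncomputable def f0 (v : ℂ) : ℂ :=
  (Real.sqrt 3 : ℝ) * Complex.I * (v - 1) / (1 - ((‖v‖ : ℝ) : ℂ) ^ 2) + u0

/-- The map `g = f₀ ∘ h`. -/
noncomputable def gfun (p : ℝ × ℝ) : ℂ := f0 (hfun p)

/-- The trapezoid `Ξ = {(η, ξ) : −3π/2 < η ≤ π/2, ξ < −η}`. -/
def Xi : Set (ℝ × ℝ) :=
  {p : ℝ × ℝ | -(3 * Real.pi / 2) < p.1 ∧ p.1 ≤ Real.pi / 2 ∧ p.2 < -p.1}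

/-- The interior of the trapezoid `Ξ`. -/
def XiInt : Set (ℝ × ℝ) :=
  {p : ℝ × ℝ | -(3 * Real.pi / 2) < p.1 ∧ p.1 < Real.pi / 2 ∧ p.2 < -p.1}

/-- The curve `Γ_{π/2} = {g(π/2, ξ) : ξ < −π/2}`. -/
noncomputable def GammaHalfPi : Set ℂ :=
  (fun ξ : ℝ => gfun (Real.pi / 2, ξ)) '' Set.Iio (-(Real.pi / 2))

/-! ### Auxiliary definitions -/

noncomputable def f0inv (u : ℂ) : ℂ :=
  1 + ((2 * u.im / ‖u - u0‖ ^ 2 : ℝ) : ℂ) * (Complex.I * (u - u0))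

noncomputable def Lfun (v : ℂ) : ℝ := Real.log (‖v‖) / Real.sqrt 3

noncomputable def Phi (v : ℂ) : ℂ :=
  v * Complex.exp (((Lfun v - Real.pi/2 : ℝ) : ℂ) * Complex.I)

noncomputable def hinv (v : ℂ) : ℝ × ℝ :=
  (-(Lfun v) - (Complex.arg (Phi v) - (Lfun v - Real.pi/2)),
    Complex.arg (Phi v) - (Lfun v - Real.pi/2))

noncomputable def Ginv (u : ℂ) : ℝ × ℝ := hinv (f0inv u)

def DD : Set ℂ := {u : ℂ | 0 < u.im} \ {u0}
def EE : Set ℂ := {v : ℂ | 1 < ‖v‖}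
def WW : Set ℂ := {v : ℂ | v ≠ 0 ∧ ((Phi v).im ≠ 0 ∨ 0 < (Phi v).re)}
noncomputable def UU : Set ℂ := {u : ℂ | 0 < u.im} \ (GammaHalfPi ∪ {u0})

/-! ### Basic numeric lemmas -/

lemma u0_re : u0.re = 1/2 := by simp [u0]
lemma u0_im : u0.im = Real.sqrt 3 / 2 := by simp [u0]
lemma sq_sqrt3 : Real.sqrt 3 ^ 2 = 3 := Real.sq_sqrt (by norm_num)
lemma sqrt3_pos : 0 < Real.sqrt 3 := Real.sqrt_pos.mpr (by norm_num)
lemma cast_den (v : ℂ) :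
    ((1 : ℂ) - ((‖v‖ : ℝ) : ℂ) ^ 2) = ((1 - ‖v‖ ^ 2 : ℝ) : ℂ) := by
  push_cast; ring
lemma sq_abs' (v : ℂ) : ‖v‖ ^ 2 = v.re^2 + v.im^2 := by
  rw [Complex.sq_norm, Complex.normSq_apply]; ring

/-! ### Properties of `f0` -/

lemma f0_im (v : ℂ) :
    (f0 v).im = Real.sqrt 3 * (v.re - 1) / (1 - ‖v‖ ^ 2) + Real.sqrt 3 / 2 := by
  rw [f0, cast_den, Complex.add_im, Complex.div_ofReal_im, u0_im]
  congr 2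
  simp [Complex.mul_im]

lemma f0_sub_u0 (v : ℂ) :
    f0 v - u0 = (Real.sqrt 3 : ℝ) * Complex.I * (v - 1) / ((1 - (v.re^2 + v.im^2) : ℝ) : ℂ) := by
  rw [f0, add_sub_cancel_right, cast_den, sq_abs']

lemma abs_f0_sub (v : ℂ) (hd : 1 - (v.re^2+v.im^2) ≠ 0) :
    ‖f0 v - u0‖ ^ 2 = 3 * ((v.re-1)^2 + v.im^2) / (1 - (v.re^2+v.im^2))^2 := by
  rw [Complex.sq_norm, f0_sub_u0, map_div₀, map_mul, map_mul]
  rw [Complex.normSq_ofReal, Complex.normSq_ofReal, Complex.normSq_I]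
  rw [show Complex.normSq (v - 1) = (v.re-1)^2 + v.im^2 by rw [Complex.normSq_apply]; simp; ring]
  field_simp
  ring_nf
  rw [sq_sqrt3]; ring

lemma one_lt_sq {v : ℂ} (hv : 1 < ‖v‖) : 1 < v.re^2 + v.im^2 := by
  rw [← sq_abs']; nlinarith [norm_nonneg v]

lemma f0_im_eq {v : ℂ} (hv : 1 < ‖v‖) :
    (f0 v).im = Real.sqrt 3 * ((v.re-1)^2 + v.im^2) / (2 * (v.re^2 + v.im^2 - 1)) := by
  have h1 := one_lt_sq hv
  have hd : 1 - (v.re^2 + v.im^2) ≠ 0 := by nlinarith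
  have hd2 : v.re^2 + v.im^2 - 1 ≠ 0 := by nlinarith
  rw [f0_im, sq_abs']
  field_simp
  ring

lemma f0_im_pos {v : ℂ} (hv : 1 < ‖v‖) : 0 < (f0 v).im := by
  have h1 := one_lt_sq hv
  have hne : 0 < (v.re - 1)^2 + v.im^2 := by nlinarith
  rw [f0_im_eq hv]
  have h2 : 0 < Real.sqrt 3 * ((v.re-1)^2 + v.im^2) := by positivity
  have h3 : 0 < 2 * (v.re^2 + v.im^2 - 1) := by nlinarith
  positivity

lemma f0_ne_u0 {v : ℂ} (hv : 1 < ‖v‖) : f0 v ≠ u0 := by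
  intro h
  have h1 := one_lt_sq hv
  have h0 : (Real.sqrt 3 : ℝ) * Complex.I * (v - 1) / ((1 - (v.re^2 + v.im^2) : ℝ) : ℂ) = 0 := by
    rw [← f0_sub_u0, h, sub_self]
  have hsc : ((1 - (v.re^2+v.im^2) : ℝ) : ℂ) ≠ 0 := Complex.ofReal_ne_zero.mpr (by nlinarith)
  have hs3 : ((Real.sqrt 3 : ℝ) : ℂ) ≠ 0 := Complex.ofReal_ne_zero.mpr (ne_of_gt sqrt3_pos)
  rw [div_eq_zero_iff] at h0
  rcases h0 with h0 | h0
  · rcases mul_eq_zero.mp h0 with h2 | h2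
    · exact (mul_ne_zero hs3 Complex.I_ne_zero) h2
    · rw [sub_eq_zero] at h2
      rw [h2] at hv; simp at hv
  · exact hsc h0

lemma f0inv_f0 {v : ℂ} (hv : 1 < ‖v‖) : f0inv (f0 v) = v := by
  have h1 := one_lt_sq hv
  have hd : 1 - (v.re^2 + v.im^2) ≠ 0 := by nlinarith
  have hd2 : v.re ^ 2 + v.im ^ 2 - 1 ≠ 0 := by nlinarith
  have hne : (v.re - 1)^2 + v.im^2 ≠ 0 := by nlinarith
  have h3 : Real.sqrt 3 ≠ 0 := ne_of_gt sqrt3_pos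
  have ht : (2 * (f0 v).im / ‖f0 v - u0‖ ^ 2 : ℝ)
      = (v.re^2 + v.im^2 - 1) / Real.sqrt 3 := by
    rw [f0_im_eq hv, abs_f0_sub v hd]
    field_simp
    ring_nf
    simp only [sq_sqrt3]
    ring
  rw [f0inv, ht, f0_sub_u0]
  have hsc : ((1 - (v.re^2+v.im^2) : ℝ) : ℂ) ≠ 0 := Complex.ofReal_ne_zero.mpr hd
  have hs3 : ((Real.sqrt 3 : ℝ) : ℂ) ≠ 0 := Complex.ofReal_ne_zero.mpr h3
  have key : Complex.I * ((Real.sqrt 3 : ℝ) * Complex.I * (v - 1) / ((1 - (v.re^2 + v.im^2) : ℝ) : ℂ))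
      = (Real.sqrt 3 : ℝ) * (1 - v) / ((1 - (v.re^2 + v.im^2) : ℝ) : ℂ) := by
    rw [mul_div_assoc']
    congr 1
    linear_combination ((Real.sqrt 3 : ℝ) : ℂ) * (v - 1) * Complex.I_sq
  rw [key, Complex.ofReal_div, div_mul_div_comm]
  have fin : (((v.re^2+v.im^2-1 : ℝ)) : ℂ) * ((Real.sqrt 3 : ℝ) * (1 - v))
      / (((Real.sqrt 3 : ℝ) : ℂ) * ((1 - (v.re^2+v.im^2) : ℝ) : ℂ)) = v - 1 := by
    rw [div_eq_iff (mul_ne_zero hs3 hsc)]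
    push_cast
    ring
  rw [fin]
  ring

lemma f0inv_re (u : ℂ) :
    (f0inv u).re = 1 - (2 * u.im / ‖u - u0‖ ^ 2) * (u - u0).im := by
  rw [f0inv, Complex.add_re, Complex.one_re, Complex.re_ofReal_mul, Complex.mul_re,
    Complex.I_re, Complex.I_im]
  ring

lemma f0inv_im (u : ℂ) :
    (f0inv u).im = (2 * u.im / ‖u - u0‖ ^ 2) * (u - u0).re := by
  rw [f0inv, Complex.add_im, Complex.one_im, Complex.im_ofReal_mul, Complex.mul_im,
    Complex.I_re, Complex.I_im]
  ring

lemma abs_f0inv_sq (u : ℂ) (hu : u ≠ u0) :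
    ‖f0inv u‖ ^ 2 = 1 + Real.sqrt 3 * (2 * u.im / ‖u - u0‖ ^ 2) := by
  have hw : u - u0 ≠ 0 := sub_ne_zero.mpr hu
  set A : ℝ := (u - u0).re with hA
  set B : ℝ := (u - u0).im with hB
  have hS : A^2 + B^2 ≠ 0 := by
    rw [hA, hB, ← sq_abs']
    exact pow_ne_zero 2 (norm_ne_zero_iff.mpr hw)
  have him : u.im = B + Real.sqrt 3 / 2 := by
    rw [hB, Complex.sub_im, u0_im]; ring
  rw [sq_abs' (f0inv u), f0inv_re, f0inv_im, sq_abs' (u - u0), ← hA, ← hB, him]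
  field_simp
  ring

lemma tpos (u : ℂ) (h1 : 0 < u.im) (hu : u ≠ u0) : 0 < 2 * u.im / ‖u - u0‖ ^ 2 := by
  have hw : u - u0 ≠ 0 := sub_ne_zero.mpr hu
  have hS : 0 < ‖u - u0‖ ^ 2 := pow_pos (norm_pos_iff.mpr hw) 2
  exact div_pos (by linarith) hS

lemma abs_f0inv (u : ℂ) (h1 : 0 < u.im) (hu : u ≠ u0) : 1 < ‖f0inv u‖ := by
  have ht := tpos u h1 hu
  have h2 := abs_f0inv_sq u hu
  nlinarith [norm_nonneg (f0inv u), sqrt3_pos]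

lemma f0_f0inv (u : ℂ) (h1 : 0 < u.im) (hu : u ≠ u0) : f0 (f0inv u) = u := by
  have ht := tpos u h1 hu
  set t : ℝ := 2 * u.im / ‖u - u0‖ ^ 2 with hts
  have habs := abs_f0inv_sq u hu
  rw [f0, cast_den, habs]
  have hc : ((1 - (1 + Real.sqrt 3 * t) : ℝ) : ℂ) = -((Real.sqrt 3 * t : ℝ) : ℂ) := by
    push_cast; ring
  rw [hc]
  have hsub : f0inv u - 1 = ((t : ℝ) : ℂ) * (Complex.I * (u - u0)) := by
    rw [f0inv]; ring
  rw [hsub]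
  have hnum : ((Real.sqrt 3 : ℝ) : ℂ) * Complex.I * (((t : ℝ) : ℂ) * (Complex.I * (u - u0)))
      = -(((Real.sqrt 3 * t : ℝ) : ℂ) * (u - u0)) := by
    push_cast
    linear_combination (((Real.sqrt 3 : ℝ) : ℂ) * ((t : ℝ) : ℂ) * (u - u0)) * Complex.I_sq
  rw [hnum, neg_div_neg_eq]
  have hnz : ((Real.sqrt 3 * t : ℝ) : ℂ) ≠ 0 :=
    Complex.ofReal_ne_zero.mpr (ne_of_gt (by nlinarith [sqrt3_pos]))
  rw [mul_div_cancel_left₀ _ hnz]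
  ring

lemma bijOn_f0 : Set.BijOn f0 EE DD := by
  refine ⟨fun v hv => ⟨f0_im_pos hv, f0_ne_u0 hv⟩, fun v hv w hw h => ?_, fun u hu => ?_⟩
  · rw [← f0inv_f0 (show 1 < ‖v‖ from hv), ← f0inv_f0 (show 1 < ‖w‖ from hw), h]
  · obtain ⟨h1, h2⟩ := hu
    exact ⟨f0inv u, abs_f0inv u h1 h2, f0_f0inv u h1 h2⟩

/-! ### Properties of `hfun` -/

lemma hfun_eq (p : ℝ × ℝ) :
    hfun p = ((Real.exp (-(Real.sqrt 3) * (p.1 + p.2)) : ℝ) : ℂ)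
      * Complex.exp ((p.2 : ℂ) * Complex.I) := by
  rw [hfun, Complex.exp_add, Complex.ofReal_exp, mul_comm Complex.I]

lemma abs_hfun (p : ℝ × ℝ) :
    ‖hfun p‖ = Real.exp (-(Real.sqrt 3) * (p.1 + p.2)) := by
  rw [hfun_eq, norm_mul, Complex.norm_exp_ofReal_mul_I, mul_one, Complex.norm_real, Real.norm_eq_abs,
    abs_of_pos (Real.exp_pos _)]

lemma hfun_abs_lt {p : ℝ × ℝ} (hp : p ∈ Xi) : 1 < ‖hfun p‖ := by
  rw [abs_hfun]
  have h := hp.2.2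
  have : 0 < -(Real.sqrt 3) * (p.1 + p.2) := by nlinarith [sqrt3_pos]
  exact Real.one_lt_exp_iff.mpr this

lemma Lfun_hfun (p : ℝ × ℝ) : Lfun (hfun p) = -(p.1 + p.2) := by
  rw [Lfun, abs_hfun, Real.log_exp]
  field_simp

lemma Phi_hfun (p : ℝ × ℝ) :
    Phi (hfun p) = ((Real.exp (-(Real.sqrt 3) * (p.1 + p.2)) : ℝ) : ℂ)
      * Complex.exp (((-p.1 - Real.pi/2 : ℝ) : ℂ) * Complex.I) := by
  rw [Phi, Lfun_hfun, hfun_eq, mul_assoc, ← Complex.exp_add]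
  congr 2
  push_cast
  ring

lemma arg_Phi {p : ℝ × ℝ} (h1 : -(3 * Real.pi / 2) < p.1) (h2 : p.1 < Real.pi / 2) :
    Complex.arg (Phi (hfun p)) = -p.1 - Real.pi/2 := by
  rw [Phi_hfun, Complex.exp_mul_I]
  have hmem : -p.1 - Real.pi/2 ∈ Set.Ioc (-Real.pi) Real.pi := by
    constructor <;> [linarith; linarith]
  have := Complex.arg_mul_cos_add_sin_mul_I (Real.exp_pos (-(Real.sqrt 3) * (p.1 + p.2))) hmem
  simpa using this

lemma hinv_hfun {p : ℝ × ℝ} (h1 : -(3 * Real.pi / 2) < p.1) (h2 : p.1 < Real.pi / 2) :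
    hinv (hfun p) = p := by
  rw [hinv, arg_Phi h1 h2, Lfun_hfun]
  ext <;> simp <;> ring

lemma Phi_boundary {p : ℝ × ℝ} (hb : p.1 = Real.pi / 2) :
    Phi (hfun p) = -((Real.exp (-(Real.sqrt 3) * (p.1 + p.2)) : ℝ) : ℂ) := by
  rw [Phi_hfun, hb, Complex.exp_mul_I]
  have : (-(Real.pi/2) - Real.pi/2 : ℝ) = -Real.pi := by ring
  rw [this]
  rw [← Complex.ofReal_cos, ← Complex.ofReal_sin]
  simp

lemma hfun_injOn : Set.InjOn hfun Xi := by
  rintro ⟨a, b⟩ hp ⟨c, d⟩ hq h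
  rw [hfun, hfun] at h
  rw [Complex.exp_eq_exp_iff_exists_int] at h
  obtain ⟨n, hn⟩ := h
  have hre := congrArg Complex.re hn
  have him := congrArg Complex.im hn
  simp [Complex.add_re, Complex.add_im, Complex.mul_re, Complex.mul_im] at hre him
  obtain ⟨ha1, ha2, ha3⟩ := hp
  obtain ⟨hc1, hc2, hc3⟩ := hq
  have hsum : a + b = c + d := hre
  have hn0 : n = 0 := by
    have hpi := Real.pi_pos
    have h1 : (n : ℝ) * (2 * Real.pi) = b - d := by linarith [him]
    have h2 : a - c = -(n : ℝ) * (2 * Real.pi) := by nlinarith [h1, hsum]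
    have hb1 : a - c < 2 * Real.pi := by simp only [Xi] at *; nlinarith
    have hb2 : -(2 * Real.pi) < a - c := by nlinarith
    rcases lt_trichotomy n 0 with h | h | h
    · have : (n : ℝ) ≤ -1 := by exact_mod_cast Int.le_sub_one_of_lt h
      nlinarith
    · exact h
    · have : (1 : ℝ) ≤ (n : ℝ) := by exact_mod_cast h
      nlinarith
  subst hn0
  simp at him
  have : b = d := by linarith [him]
  subst this
  have : a = c := by linarith [hsum]
  simp [this]

lemma hfun_surjOn : Set.SurjOn hfun Xi EE := by
  rintro v (hv : 1 < ‖v‖)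
  have hvpos : 0 < ‖v‖ := lt_trans one_pos hv
  have hv0 : v ≠ 0 := by
    intro h; rw [h] at hv; simp at hv; linarith
  set L : ℝ := Real.log (‖v‖) / Real.sqrt 3 with hL
  have hLpos : 0 < L := div_pos (Real.log_pos hv) sqrt3_pos
  have hp2 : (0 : ℝ) < 2 * Real.pi := by positivity
  set ξ : ℝ := toIcoMod hp2 (-(Real.pi/2) - L) (Complex.arg v) with hξ
  have hmem := toIcoMod_mem_Ico hp2 (-(Real.pi/2) - L) (Complex.arg v)
  obtain ⟨hmem1, hmem2⟩ := hmem
  refine ⟨(-L - ξ, ξ), ⟨?_, ?_, ?_⟩, ?_⟩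
  · show -(3 * Real.pi / 2) < -L - ξ
    have : ξ < -(Real.pi/2) - L + 2 * Real.pi := hmem2
    linarith
  · show -L - ξ ≤ Real.pi / 2
    linarith
  · show ξ < -(-L - ξ)
    linarith
  · have hsum : (-(Real.sqrt 3) * ((-L - ξ) + ξ) : ℝ) = Real.log (‖v‖) := by
      have h3 : Real.sqrt 3 ≠ 0 := ne_of_gt sqrt3_pos
      field_simp [hL]
      rw [hL]; field_simp; ring
    rw [hfun]
    simp only
    rw [hsum]
    obtain ⟨n, hn⟩ : ∃ n : ℤ, ξ = Complex.arg v - n * (2 * Real.pi) := by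
      refine ⟨toIcoDiv hp2 (-(Real.pi/2) - L) (Complex.arg v), ?_⟩
      have h5 := self_sub_toIcoMod hp2 (-(Real.pi/2) - L) (Complex.arg v)
      rw [zsmul_eq_mul] at h5
      rw [hξ]
      linarith
    rw [hn]
    have : ((Real.log (‖v‖) : ℝ) : ℂ)
          + Complex.I * ((Complex.arg v - n * (2*Real.pi) : ℝ) : ℂ)
        = ((Real.log (‖v‖) : ℝ) : ℂ) + (Complex.arg v : ℝ) * Complex.I
          - n * (2 * Real.pi * Complex.I) := by
      push_cast; ring
    rw [this, Complex.exp_sub, Complex.exp_int_mul_two_pi_mul_I, div_one, Complex.exp_add,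
      ← Complex.ofReal_exp, Real.exp_log hvpos, Complex.norm_mul_exp_arg_mul_I]

lemma bijOn_hfun : Set.BijOn hfun Xi EE :=
  ⟨fun p hp => hfun_abs_lt hp, hfun_injOn, hfun_surjOn⟩

lemma gfun_comp : gfun = f0 ∘ hfun := rfl

lemma bijOn_gfun : Set.BijOn gfun Xi DD := by
  rw [gfun_comp]
  exact bijOn_f0.comp bijOn_hfun

/-! ### Boundary and interior -/

lemma XiInt_subset_Xi : XiInt ⊆ Xi := fun p hp => ⟨hp.1, le_of_lt hp.2.1, hp.2.2⟩

lemma mem_boundary_iff {p : ℝ × ℝ} (hp : p ∈ Xi) : p ∉ XiInt ↔ p.1 = Real.pi/2 := by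
  obtain ⟨h1, h2, h3⟩ := hp
  constructor
  · intro h
    by_contra hne
    exact h ⟨h1, lt_of_le_of_ne h2 hne, h3⟩
  · intro h hint
    exact absurd hint.2.1 (by rw [h]; exact lt_irrefl _)

lemma Gamma_eq : GammaHalfPi = gfun '' (Xi \ XiInt) := by
  ext u
  constructor
  · rintro ⟨ξ, hξ, rfl⟩
    have hpi := Real.pi_pos
    have hξ' : ξ < -(Real.pi/2) := hξ
    refine ⟨(Real.pi/2, ξ), ⟨⟨by linarith, le_refl _, by simpa using hξ'⟩, ?_⟩, rfl⟩
    intro hint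
    exact absurd hint.2.1 (lt_irrefl _)
  · rintro ⟨p, ⟨hp, hpn⟩, rfl⟩
    have hb := (mem_boundary_iff hp).mp hpn
    refine ⟨p.2, ?_, ?_⟩
    · show p.2 < -(Real.pi/2)
      have := hp.2.2
      rw [hb] at this
      exact this
    · show gfun (Real.pi/2, p.2) = gfun p
      rw [show ((Real.pi/2 : ℝ), p.2) = p from Prod.ext hb.symm rfl]

lemma Phi_hfun_ne_zero (p : ℝ × ℝ) : Phi (hfun p) ≠ 0 :=
  mul_ne_zero (Complex.exp_ne_zero _) (Complex.exp_ne_zero _)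

lemma mem_WW_of_int {p : ℝ × ℝ} (hp : p ∈ XiInt) : hfun p ∈ WW := by
  refine ⟨Complex.exp_ne_zero _, ?_⟩
  by_contra hcon
  push_neg at hcon
  obtain ⟨him, hre⟩ := hcon
  have hPhine := Phi_hfun_ne_zero p
  have hre0 : (Phi (hfun p)).re ≠ 0 := fun h => hPhine (Complex.ext h him)
  have harg : Complex.arg (Phi (hfun p)) = Real.pi :=
    Complex.arg_eq_pi_iff.mpr ⟨lt_of_le_of_ne hre hre0, him⟩
  rw [arg_Phi hp.1 hp.2.1] at harg
  have hpi := Real.pi_pos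
  have h1 := hp.1
  linarith

lemma not_mem_WW_boundary {p : ℝ × ℝ} (hb : p.1 = Real.pi/2) : hfun p ∉ WW := by
  intro hw
  rcases hw.2 with him | hre
  · apply him
    rw [Phi_boundary hb, Complex.neg_im, Complex.ofReal_im, neg_zero]
  · rw [Phi_boundary hb] at hre
    simp only [Complex.neg_re, Complex.ofReal_re] at hre
    linarith [Real.exp_pos (-(Real.sqrt 3) * (p.1 + p.2))]

lemma key1 {p : ℝ × ℝ} (hp : p ∈ Xi) : f0inv (gfun p) = hfun p :=
  f0inv_f0 (hfun_abs_lt hp)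

lemma key2 {p : ℝ × ℝ} (hp : p ∈ XiInt) : Ginv (gfun p) = p := by
  rw [Ginv, key1 (XiInt_subset_Xi hp), hinv_hfun hp.1 hp.2.1]

lemma gfun_image_int : gfun '' XiInt = DD \ GammaHalfPi := by
  rw [Gamma_eq]
  ext u
  constructor
  · rintro ⟨p, hp, rfl⟩
    refine ⟨bijOn_gfun.mapsTo (XiInt_subset_Xi hp), ?_⟩
    rintro ⟨q, ⟨hq, hqn⟩, heq⟩
    have := bijOn_gfun.injOn hq (XiInt_subset_Xi hp) heq
    exact hqn (by rwa [this])
  · rintro ⟨hu, hnim⟩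
    obtain ⟨p, hp, rfl⟩ := bijOn_gfun.surjOn hu
    by_cases hint : p ∈ XiInt
    · exact ⟨p, hint, rfl⟩
    · exact absurd ⟨p, ⟨hp, hint⟩, rfl⟩ hnim

lemma UU_eq : UU = DD \ GammaHalfPi := by
  ext u
  simp only [UU, DD, Set.mem_diff, Set.mem_union, Set.mem_singleton_iff, Set.mem_setOf_eq]
  tauto

lemma gfun_mem_UU {p : ℝ × ℝ} (hp : p ∈ XiInt) : gfun p ∈ UU := by
  rw [UU_eq, ← gfun_image_int]
  exact ⟨p, hp, rfl⟩

lemma exists_preim {u : ℂ} (hu : u ∈ UU) : ∃ p ∈ XiInt, gfun p = u := by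
  rw [UU_eq, ← gfun_image_int] at hu
  exact hu

lemma Ginv_mem {u : ℂ} (hu : u ∈ UU) : Ginv u ∈ XiInt := by
  obtain ⟨p, hp, rfl⟩ := exists_preim hu
  rw [key2 hp]
  exact hp

lemma gfun_Ginv {u : ℂ} (hu : u ∈ UU) : gfun (Ginv u) = u := by
  obtain ⟨p, hp, rfl⟩ := exists_preim hu
  rw [key2 hp]

lemma UU_subset : UU ⊆ {u : ℂ | u ≠ u0} := by
  intro u hu h
  exact hu.2 (Or.inr (by rw [h]; rfl))

lemma f0inv_mem_WW {u : ℂ} (hu : u ∈ UU) : f0inv u ∈ WW := by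
  obtain ⟨p, hp, rfl⟩ := exists_preim hu
  rw [key1 (XiInt_subset_Xi hp)]
  exact mem_WW_of_int hp

/-! ### Continuity -/

lemma continuous_hfun : Continuous hfun := by
  unfold hfun
  fun_prop

lemma continuousOn_f0 : ContinuousOn f0 EE := by
  apply ContinuousOn.add _ continuousOn_const
  apply ContinuousOn.div
  · exact (continuous_const.mul (continuous_id.sub continuous_const)).continuousOn
  · exact (continuous_const.sub
      ((Complex.continuous_ofReal.comp continuous_norm).pow 2)).continuousOn
  · intro v hv
    rw [cast_den]
    refine Complex.ofReal_ne_zero.mpr ?_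
    have h1 := one_lt_sq (show 1 < ‖v‖ from hv)
    rw [sq_abs']
    nlinarith

lemma continuousOn_gfun : ContinuousOn gfun Xi := by
  rw [gfun_comp]
  exact continuousOn_f0.comp continuous_hfun.continuousOn (fun p hp => hfun_abs_lt hp)

lemma continuousOn_f0inv : ContinuousOn f0inv {u : ℂ | u ≠ u0} := by
  apply ContinuousOn.add continuousOn_const
  apply ContinuousOn.mul
  · apply Complex.continuous_ofReal.comp_continuousOn
    apply ContinuousOn.div
    · exact (continuous_const.mul Complex.continuous_im).continuousOn
    · exact ((continuous_norm.comp (continuous_id.sub continuous_const)).pow 2).continuousOn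
    · intro u hu
      exact pow_ne_zero 2 (norm_ne_zero_iff.mpr (sub_ne_zero.mpr hu))
  · exact (continuous_const.mul (continuous_id.sub continuous_const)).continuousOn

lemma WW_subset : WW ⊆ {v : ℂ | v ≠ 0} := fun v hv => hv.1

lemma continuousOn_Lfun : ContinuousOn Lfun {v : ℂ | v ≠ 0} := by
  intro v hv
  apply ContinuousAt.continuousWithinAt
  apply ContinuousAt.div_const
  exact (Real.continuousAt_log (norm_ne_zero_iff.mpr hv)).comp continuous_norm.continuousAt

lemma continuousOn_Phi : ContinuousOn Phi {v : ℂ | v ≠ 0} := by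
  apply ContinuousOn.mul continuousOn_id
  apply Complex.continuous_exp.comp_continuousOn
  apply ContinuousOn.mul _ continuousOn_const
  exact Complex.continuous_ofReal.comp_continuousOn (continuousOn_Lfun.sub continuousOn_const)

lemma isOpen_WW : IsOpen WW := by
  have h1 : WW = {v : ℂ | v ≠ 0} ∩ Phi ⁻¹' {z : ℂ | z.im ≠ 0 ∨ 0 < z.re} := rfl
  rw [h1]
  apply ContinuousOn.isOpen_inter_preimage continuousOn_Phi isOpen_ne
  apply IsOpen.union
  · exact isOpen_ne_fun Complex.continuous_im continuous_const
  · exact isOpen_lt continuous_const Complex.continuous_re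

lemma isOpen_UU : IsOpen UU := by
  have h1 : UU = ({u : ℂ | 0 < u.im} ∩ {u : ℂ | u ≠ u0}) ∩ f0inv ⁻¹' WW := by
    ext u
    constructor
    · intro hu
      exact ⟨⟨hu.1, UU_subset hu⟩, f0inv_mem_WW hu⟩
    · rintro ⟨⟨h1, h2⟩, h3⟩
      obtain ⟨p, hp, rfl⟩ := bijOn_gfun.surjOn ⟨h1, h2⟩
      rw [UU_eq, ← gfun_image_int]
      by_cases hint : p ∈ XiInt
      · exact ⟨p, hint, rfl⟩
      · exfalso
        have hb := (mem_boundary_iff hp).mp hint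
        rw [Set.mem_preimage, key1 hp] at h3
        exact not_mem_WW_boundary hb h3
  rw [h1]
  exact ContinuousOn.isOpen_inter_preimage
    (continuousOn_f0inv.mono Set.inter_subset_right)
    ((isOpen_lt continuous_const Complex.continuous_im).inter isOpen_ne) isOpen_WW

lemma continuousOn_hinv : ContinuousOn hinv WW := by
  have hL := continuousOn_Lfun.mono WW_subset
  have harg : ContinuousOn (fun v => Complex.arg (Phi v)) WW := by
    intro v hv
    have hc : ContinuousWithinAt Phi WW v := (continuousOn_Phi.mono WW_subset) v hv
    have hsl : Phi v ∈ Complex.slitPlane := Complex.mem_slitPlane_iff.mpr hv.2.symm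
    exact (Complex.continuousAt_arg hsl).comp_continuousWithinAt hc
  apply ContinuousOn.prodMk
  · exact (hL.neg).sub (harg.sub (hL.sub continuousOn_const))
  · exact harg.sub (hL.sub continuousOn_const)

lemma continuousOn_Ginv : ContinuousOn Ginv UU :=
  ContinuousOn.comp continuousOn_hinv (continuousOn_f0inv.mono UU_subset)
    (fun _ hu => f0inv_mem_WW hu)

/-! ### Convexity -/

lemma convex_XiInt : Convex ℝ XiInt := by
  intro p hp q hq a b ha hb hab
  obtain ⟨h1, h2, h3⟩ := hp
  obtain ⟨k1, k2, k3⟩ := hq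
  have keylt : ∀ x y : ℝ, 0 < x → 0 < y → 0 < a * x + b * y := by
    intro x y hx hy
    rcases eq_or_lt_of_le ha with hA | hA
    · have hb1 : b = 1 := by linarith
      rw [← hA, hb1]; simpa using hy
    · nlinarith
  have c1 : (a • p + b • q).1 = a * p.1 + b * q.1 := by
    simp [Prod.fst_add, Prod.smul_fst, smul_eq_mul]
  have c2 : (a • p + b • q).2 = a * p.2 + b * q.2 := by
    simp [Prod.snd_add, Prod.smul_snd, smul_eq_mul]
  refine ⟨?_, ?_, ?_⟩
  · rw [c1]
    have := keylt (p.1 + 3 * Real.pi / 2) (q.1 + 3 * Real.pi / 2) (by linarith) (by linarith)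
    nlinarith
  · rw [c1]
    have := keylt (Real.pi / 2 - p.1) (Real.pi / 2 - q.1) (by linarith) (by linarith)
    nlinarith
  · rw [c1, c2]
    have := keylt (-(p.1 + p.2)) (-(q.1 + q.2)) (by linarith) (by linarith)
    nlinarith

lemma XiInt_nonempty : XiInt.Nonempty := by
  refine ⟨(0, -1), ?_, ?_, ?_⟩
  · have := Real.pi_pos; simpa using by linarith
  · have := Real.pi_pos; simpa using by linarith
  · norm_num

/-! ### Main theorem -/

/-- `g = f₀ ∘ h` is a continuous bijection from `Ξ` onto `ℂ₊ \ {u₀}`, mapping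
the interior of `Ξ` homeomorphically onto `ℂ₊ \ (Γ_{π/2} ∪ {u₀})`, which is an open, simply
connected subset of `ℂ`. -/
theorem gfun_continuous_bijective_homeo :
    ContinuousOn gfun Xi ∧
    Set.BijOn gfun Xi ({u : ℂ | 0 < u.im} \ {u0}) ∧
    IsOpen ({u : ℂ | 0 < u.im} \ (GammaHalfPi ∪ {u0})) ∧
    SimplyConnectedSpace ({u : ℂ | 0 < u.im} \ (GammaHalfPi ∪ {u0}) : Set ℂ) ∧
    ∃ e : XiInt ≃ₜ ({u : ℂ | 0 < u.im} \ (GammaHalfPi ∪ {u0}) : Set ℂ),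
      ∀ p : XiInt, (e p : ℂ) = gfun (p : ℝ × ℝ) := by
  haveI hcontr : ContractibleSpace XiInt := convex_XiInt.contractibleSpace XiInt_nonempty
  let e : XiInt ≃ₜ UU :=
    { toFun := fun p => ⟨gfun p, gfun_mem_UU p.2⟩
      invFun := fun u => ⟨Ginv u, Ginv_mem u.2⟩
      left_inv := fun p => Subtype.ext (key2 p.2)
      right_inv := fun u => Subtype.ext (gfun_Ginv u.2)
      continuous_toFun :=
        Continuous.subtype_mk ((continuousOn_gfun.mono XiInt_subset_Xi).restrict) _
      continuous_invFun := Continuous.subtype_mk (continuousOn_Ginv.restrict) _ }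
  haveI : ContractibleSpace UU := e.symm.contractibleSpace
  refine ⟨continuousOn_gfun, bijOn_gfun, isOpen_UU, ?_, ⟨e, fun p => rfl⟩⟩
  show SimplyConnectedSpace UU
  infer_instance
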